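/- arXiv:1511.05547 — 3 statements merged into one kernel-verified Lean document; each statement's English description precedes it below -/
import Mathlib

section
/- (Eckart–Young for Frobenius norm) Let Y be a real m×n matrix with singular value decomposition Y = U Σ Vᵀ, and let r ≤ rank(Y). Then among all real m×n matrices X with rank(X) ≤ r, the truncated SVD X* = U_{[1:r]} Σ_{[1:r]} V_{[1:r]}ᵀ minimizes ‖X − Y‖_F. -/
open Matrix

open scoped BigOperators

/-- Squared Frobenius norm. -/
noncomputable def frobNorm {m n : ℕ} (M : Matrix (Fin m) (Fin n) ℝ) : ℝ :=
  Real.sqrt (∑ i, ∑ j, (M i j) ^ 2)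


lemma exists_orthonormal_ker {m n r : ℕ} (X : Matrix (Fin m) (Fin n) ℝ)
    (hX : X.rank ≤ r) (hrn : r ≤ n) :
    ∃ v : Fin (n - r) → (Fin n → ℝ),
      (∀ l, X.mulVec (v l) = 0) ∧
      (∀ l l', ∑ j, v l j * v l' j = if l = l' then 1 else 0) := by
  classical
  set E := EuclideanSpace ℝ (Fin n)
  let e : E ≃ₗ[ℝ] (Fin n → ℝ) := WithLp.linearEquiv 2 ℝ (Fin n → ℝ)
  let L : E →ₗ[ℝ] (Fin m → ℝ) := X.mulVecLin ∘ₗ e.toLinearMap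
  have hrange : LinearMap.range L = LinearMap.range X.mulVecLin := by
    rw [LinearMap.range_comp, LinearEquiv.range, Submodule.map_top]
  have hrn2 : Module.finrank ℝ (LinearMap.range L) + Module.finrank ℝ (LinearMap.ker L)
      = n := by
    rw [LinearMap.finrank_range_add_finrank_ker]
    simp [E]
  have hrk : Module.finrank ℝ (LinearMap.range L) = X.rank := by
    rw [hrange]; rfl
  have hker : n - r ≤ Module.finrank ℝ (LinearMap.ker L) := by omega
  let b := stdOrthonormalBasis ℝ (LinearMap.ker L)
  let v : Fin (n - r) → (Fin n → ℝ) := fun l => (b (Fin.castLE hker l) : E)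
  refine ⟨v, ?_, ?_⟩
  · intro l
    have : L ((b (Fin.castLE hker l) : LinearMap.ker L) : E) = 0 :=
      (b (Fin.castLE hker l)).2
    exact this
  · intro l l'
    have horth := b.orthonormal
    rw [orthonormal_iff_ite] at horth
    have := horth (Fin.castLE hker l) (Fin.castLE hker l')
    rw [Submodule.coe_inner] at this
    rw [PiLp.inner_apply] at this
    simp only [RCLike.inner_apply, conj_trivial] at this
    refine (Finset.sum_congr rfl fun x _ => mul_comm _ _).trans (this.trans ?_)
    simp [Fin.castLE_inj]
open Matrix

noncomputable def frobSq {m n : ℕ} (M : Matrix (Fin m) (Fin n) ℝ) : ℝ :=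
  ∑ i, ∑ j, (M i j) ^ 2

lemma frobSq_nonneg {m n : ℕ} (M : Matrix (Fin m) (Fin n) ℝ) : 0 ≤ frobSq M :=
  Finset.sum_nonneg fun _ _ => Finset.sum_nonneg fun _ _ => sq_nonneg _

lemma frobSq_eq_trace {m n : ℕ} (M : Matrix (Fin m) (Fin n) ℝ) :
    frobSq M = (Mᵀ * M).trace := by
  rw [Matrix.trace, frobSq, Finset.sum_comm]
  refine Finset.sum_congr rfl fun j _ => ?_
  simp [Matrix.diag, Matrix.mul_apply, sq]

-- Q properties
section Q
variable {m n k : ℕ} (v : Fin k → (Fin n → ℝ))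
  (horth : ∀ l l', ∑ j, v l j * v l' j = if l = l' then 1 else 0)

noncomputable def Qmat : Matrix (Fin n) (Fin n) ℝ := ∑ l : Fin k, vecMulVec (v l) (v l)

lemma Qmat_apply (i j : Fin n) : Qmat v i j = ∑ l, v l i * v l j := by
  simp [Qmat, vecMulVec, Matrix.sum_apply]

lemma Qmat_symm : (Qmat v)ᵀ = Qmat v := by
  ext i j; simp [Matrix.transpose_apply, Qmat_apply, mul_comm]

include horth in
lemma Qmat_idem : Qmat v * Qmat v = Qmat v := by
  ext i j
  simp only [Matrix.mul_apply, Qmat_apply]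
  calc ∑ x, (∑ l, v l i * v l x) * ∑ l', v l' x * v l' j
      = ∑ x, ∑ l, ∑ l', (v l i * v l x) * (v l' x * v l' j) :=
        Finset.sum_congr rfl fun x _ => Finset.sum_mul_sum _ _ _ _
    _ = ∑ l, ∑ l', ∑ x, (v l i * v l x) * (v l' x * v l' j) := by
        rw [Finset.sum_comm]
        exact Finset.sum_congr rfl fun l _ => Finset.sum_comm
    _ = ∑ l, ∑ l', (v l i * v l' j) * ∑ x, v l x * v l' x := by
        refine Finset.sum_congr rfl fun l _ => Finset.sum_congr rfl fun l' _ => ?_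
        rw [Finset.mul_sum]
        exact Finset.sum_congr rfl fun x _ => by ring
    _ = ∑ l, v l i * v l j := by
        refine Finset.sum_congr rfl fun l _ => ?_
        rw [Finset.sum_eq_single l]
        · rw [horth]; simp
        · intro l' _ hne; rw [horth]; simp [hne.symm]
        · simp

include horth in
lemma Qmat_trace : (Qmat v).trace = (k : ℝ) := by
  rw [Matrix.trace]
  simp only [Matrix.diag, Qmat_apply]
  rw [Finset.sum_comm]
  have : ∀ l : Fin k, ∑ i, v l i * v l i = 1 := fun l => by rw [horth]; simp
  simp [this]

lemma mul_Qmat_zero (X : Matrix (Fin m) (Fin n) ℝ) (h : ∀ l, X.mulVec (v l) = 0) :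
    X * Qmat v = 0 := by
  ext i j
  simp only [Matrix.mul_apply, Qmat_apply, Matrix.zero_apply, Finset.mul_sum]
  rw [Finset.sum_comm]
  refine Finset.sum_eq_zero fun l _ => ?_
  have h0 : ∑ x, X i x * v l x = 0 := by
    have := congrFun (h l) i
    simpa [Matrix.mulVec, dotProduct] using this
  calc ∑ x, X i x * (v l x * v l j)
      = (∑ x, X i x * v l x) * v l j := by
        rw [Finset.sum_mul]; exact Finset.sum_congr rfl fun x _ => by ring
    _ = 0 := by rw [h0, zero_mul]

end Q

lemma trace_proj_eq_frobSq {m n : ℕ} (M : Matrix (Fin m) (Fin n) ℝ)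
    (Q : Matrix (Fin n) (Fin n) ℝ) (hs : Qᵀ = Q) (hi : Q * Q = Q) :
    (Mᵀ * M * Q).trace = frobSq (M * Q) := by
  rw [frobSq_eq_trace, Matrix.transpose_mul, hs, Matrix.mul_assoc Q Mᵀ (M * Q),
    Matrix.trace_mul_comm Q (Mᵀ * (M * Q))]
  congr 1
  calc Mᵀ * M * Q = Mᵀ * M * (Q * Q) := by rw [hi]
    _ = Mᵀ * (M * Q) * Q := by
          rw [Matrix.mul_assoc Mᵀ (M * Q) Q, Matrix.mul_assoc M Q Q, ← Matrix.mul_assoc Mᵀ M (Q * Q)]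

lemma trace_proj_le_frobSq {m n : ℕ} (M : Matrix (Fin m) (Fin n) ℝ)
    (Q : Matrix (Fin n) (Fin n) ℝ) (hs : Qᵀ = Q) (hi : Q * Q = Q) :
    (Mᵀ * M * Q).trace ≤ frobSq M := by
  have hs' : (1 - Q)ᵀ = 1 - Q := by rw [Matrix.transpose_sub, hs, Matrix.transpose_one]
  have hi' : (1 - Q) * (1 - Q) = 1 - Q := by
    simp [Matrix.sub_mul, Matrix.mul_sub, hi]
  have key : frobSq M = (Mᵀ * M * Q).trace + (Mᵀ * M * (1 - Q)).trace := by
    rw [Matrix.mul_sub, Matrix.mul_one, Matrix.trace_sub, frobSq_eq_trace]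
    ring
  rw [key]
  have := (trace_proj_eq_frobSq M (1 - Q) hs' hi').symm ▸ frobSq_nonneg (M * (1 - Q))
  linarith [frobSq_nonneg (M * (1 - Q)), trace_proj_eq_frobSq M (1 - Q) hs' hi']

lemma sum_indicator_ge {n r : ℕ} (hrn : r ≤ n) :
    ∑ j : Fin n, (if r ≤ (j : ℕ) then (1 : ℝ) else 0) = (n - r : ℕ) := by
  rw [Fin.sum_univ_eq_sum_range (fun i => if r ≤ i then (1 : ℝ) else 0) n]
  rw [Finset.sum_boole]
  have hfil : (Finset.range n).filter (fun i => r ≤ i) = Finset.Ico r n := by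
    ext i
    simp [Finset.mem_filter, Finset.mem_range, Finset.mem_Ico, and_comm]
  rw [hfil]
  simp [Nat.card_Ico]

lemma lp_min {n r : ℕ} (hrn : r ≤ n) (d t : Fin n → ℝ)
    (hd0 : ∀ j, 0 ≤ d j) (hdm : ∀ i j : Fin n, i ≤ j → d j ≤ d i)
    (ht0 : ∀ j, 0 ≤ t j) (ht1 : ∀ j, t j ≤ 1)
    (hts : ((n - r : ℕ) : ℝ) ≤ ∑ j, t j) :
    ∑ j : Fin n, (if r ≤ (j : ℕ) then d j else 0) ≤ ∑ j, d j * t j := by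
  classical
  by_cases hc : r < n
  · set c := d ⟨r, hc⟩ with hcdef
    set s : Fin n → ℝ := fun j => if r ≤ (j : ℕ) then (1 : ℝ) else 0 with hsdef
    have hds : ∀ j : Fin n, (if r ≤ (j : ℕ) then d j else 0) = d j * s j := by
      intro j; simp only [hsdef]; split_ifs <;> simp
    have hsum_s : ∑ j, s j = ((n - r : ℕ) : ℝ) := sum_indicator_ge hrn
    have key : ∀ j : Fin n, 0 ≤ (d j - c) * (t j - s j) := by
      intro j
      by_cases hj : r ≤ (j : ℕ)
      · have h1 : d j ≤ c := hdm ⟨r, hc⟩ j hj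
        have h2 : t j - s j ≤ 0 := by simp only [hsdef]; rw [if_pos hj]; linarith [ht1 j]
        have := mul_nonneg (neg_nonneg.mpr (show d j - c ≤ 0 by linarith))
          (neg_nonneg.mpr h2)
        nlinarith [this]
      · have h1 : c ≤ d j := hdm j ⟨r, hc⟩ (le_of_lt (lt_of_not_ge hj))
        have h2 : 0 ≤ t j - s j := by simp only [hsdef]; rw [if_neg hj]; linarith [ht0 j]
        exact mul_nonneg (by linarith) h2
    have expand : ∑ j, (d j - c) * (t j - s j)
        = (∑ j, d j * t j) - (∑ j, d j * s j) - c * (∑ j, t j) + c * (∑ j, s j) := by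
      rw [Finset.mul_sum, Finset.mul_sum, ← Finset.sum_sub_distrib, ← Finset.sum_sub_distrib,
        ← Finset.sum_add_distrib]
      exact Finset.sum_congr rfl fun j _ => by ring
    have hsumnn : 0 ≤ ∑ j, (d j - c) * (t j - s j) := Finset.sum_nonneg fun j _ => key j
    have hc0 : 0 ≤ c := hd0 _
    have hfin : 0 ≤ c * ((∑ j, t j) - ∑ j, s j) := by
      apply mul_nonneg hc0; rw [hsum_s]; linarith
    calc ∑ j : Fin n, (if r ≤ (j : ℕ) then d j else 0) = ∑ j, d j * s j :=
          Finset.sum_congr rfl fun j _ => hds j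
      _ ≤ ∑ j, d j * t j := by nlinarith [hsumnn, hfin]
  · have hz : ∀ j : Fin n, (if r ≤ (j : ℕ) then d j else 0) = 0 := by
      intro j
      rw [if_neg]
      omega
    rw [Finset.sum_congr rfl fun j _ => hz j, Finset.sum_const_zero]
    exact Finset.sum_nonneg fun j _ => mul_nonneg (hd0 j) (ht0 j)

/-- Eckart–Young theorem for the Frobenius norm: given an SVD `Y = U S Vᵀ` with
singular values `σ` in decreasing order, the rank-`r` truncation minimizes
`‖X - Y‖_F` over all matrices `X` of rank at most `r`. -/
theorem eckart_young_frobenius (m n : ℕ) (Y : Matrix (Fin m) (Fin n) ℝ)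
    (U : Matrix (Fin m) (Fin m) ℝ) (V : Matrix (Fin n) (Fin n) ℝ)
    (σ : ℕ → ℝ) (S : Matrix (Fin m) (Fin n) ℝ)
    (hU : Uᵀ * U = 1) (hV : Vᵀ * V = 1)
    (hσ : ∀ i, 0 ≤ σ i) (hmono : ∀ i j, i ≤ j → σ j ≤ σ i)
    (hS : ∀ i j, S i j = if (i : ℕ) = (j : ℕ) then σ (i : ℕ) else 0)
    (hY : Y = U * S * Vᵀ)
    (r : ℕ) (hr : r ≤ Y.rank)
    (Sr : Matrix (Fin m) (Fin n) ℝ)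
    (hSr : ∀ i j, Sr i j =
      if (i : ℕ) = (j : ℕ) ∧ (i : ℕ) < r then σ (i : ℕ) else 0) :
    ∀ X : Matrix (Fin m) (Fin n) ℝ, X.rank ≤ r →
      frobNorm (U * Sr * Vᵀ - Y) ≤ frobNorm (X - Y) := by
  classical
  intro X hX
  have hrn : r ≤ n := hr.trans (by simpa using Y.rank_le_card_width)
  have hfd : ∀ M : Matrix (Fin m) (Fin n) ℝ, frobNorm M = Real.sqrt (frobSq M) :=
    fun _ => rfl
  rw [hfd, hfd]
  apply Real.sqrt_le_sqrt
  -- setup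
  have hV' : V * Vᵀ = 1 := mul_eq_one_comm.mp hV
  obtain ⟨v, hXv, horth⟩ := exists_orthonormal_ker X hX hrn
  set Q : Matrix (Fin n) (Fin n) ℝ := Qmat v with hQdef
  have hQs : Qᵀ = Q := Qmat_symm v
  have hQi : Q * Q = Q := Qmat_idem v horth
  have hXQ : X * Q = 0 := mul_Qmat_zero v X hXv
  have hQtr : Q.trace = ((n - r : ℕ) : ℝ) := Qmat_trace v horth
  set D : Matrix (Fin n) (Fin n) ℝ := Sᵀ * S with hDdef
  set P : Matrix (Fin n) (Fin n) ℝ := Vᵀ * Q * V with hPdef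
  -- P is a symmetric idempotent
  have hPs : Pᵀ = P := by
    rw [hPdef, Matrix.transpose_mul, Matrix.transpose_mul, Matrix.transpose_transpose,
      hQs, ← Matrix.mul_assoc]
  have hPi : P * P = P := by
    rw [hPdef]
    simp only [Matrix.mul_assoc]
    rw [← Matrix.mul_assoc V Vᵀ (Q * V), hV', Matrix.one_mul, ← Matrix.mul_assoc Q Q V, hQi]
  have hPe : ∀ a b, P a b = P b a := by
    intro a b
    conv_lhs => rw [← hPs]
    rfl
  have hPdiag : ∀ j, P j j = ∑ x, (P j x) ^ 2 := by
    intro j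
    conv_lhs => rw [← hPi]
    rw [Matrix.mul_apply]
    exact Finset.sum_congr rfl fun x _ => by rw [sq, hPe x j]
  have ht0 : ∀ j, 0 ≤ P j j := fun j => by
    rw [hPdiag]; exact Finset.sum_nonneg fun x _ => sq_nonneg _
  have ht1 : ∀ j, P j j ≤ 1 := by
    intro j
    have h1 : (P j j) ^ 2 ≤ ∑ x, (P j x) ^ 2 :=
      Finset.single_le_sum (fun x _ => sq_nonneg (P j x)) (Finset.mem_univ j)
    rw [← hPdiag j] at h1
    nlinarith [ht0 j]
  have htrP : ∑ j, P j j = ((n - r : ℕ) : ℝ) := by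
    have h1 : ∑ j, P j j = P.trace := rfl
    have h2 : P.trace = Q.trace := by
      rw [hPdef, Matrix.mul_assoc, Matrix.trace_mul_comm, Matrix.mul_assoc, hV',
        Matrix.mul_one]
    rw [h1, h2, hQtr]
  -- diagonal facts about D
  have hDoff : ∀ j c : Fin n, (j : ℕ) ≠ (c : ℕ) → D j c = 0 := by
    intro j c hne
    rw [hDdef, Matrix.mul_apply]
    refine Finset.sum_eq_zero fun i _ => ?_
    rw [Matrix.transpose_apply, hS, hS]
    split_ifs with h1 h2
    · exact absurd (h1.symm.trans h2) hne
    all_goals ring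
  have hDdiag : ∀ j : Fin n, D j j = if (j : ℕ) < m then σ (j : ℕ) ^ 2 else 0 := by
    intro j
    rw [hDdef, Matrix.mul_apply]
    by_cases hjm : (j : ℕ) < m
    · rw [Finset.sum_eq_single (⟨(j : ℕ), hjm⟩ : Fin m), if_pos hjm]
      · rw [Matrix.transpose_apply, hS]; simp [sq]
      · intro b _ hbne
        rw [Matrix.transpose_apply, hS, if_neg, zero_mul]
        exact fun hcon => hbne (Fin.ext hcon)
      · simp
    · rw [if_neg hjm]
      refine Finset.sum_eq_zero fun i _ => ?_
      rw [Matrix.transpose_apply, hS, if_neg, zero_mul]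
      omega
  have hd0 : ∀ j : Fin n, 0 ≤ D j j := by
    intro j; rw [hDdiag]; split_ifs
    · positivity
    · exact le_refl 0
  have hdm : ∀ i j : Fin n, i ≤ j → D j j ≤ D i i := by
    intro i j hij
    rw [hDdiag, hDdiag]
    have hvle : (i : ℕ) ≤ (j : ℕ) := hij
    split_ifs with h1 h2 h2
    · have := hmono (i : ℕ) (j : ℕ) hvle
      have hσj := hσ (j : ℕ)
      nlinarith
    · omega
    · positivity
    · exact le_refl 0
  -- trace of D * P is a diagonal sum
  have htrDP : (D * P).trace = ∑ j, D j j * P j j := by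
    rw [Matrix.trace]
    refine Finset.sum_congr rfl fun j _ => ?_
    rw [Matrix.diag_apply, Matrix.mul_apply]
    rw [Finset.sum_eq_single j]
    · intro x _ hxj
      rw [hDoff j x (fun h => hxj (Fin.ext h.symm)), zero_mul]
    · simp
  -- the trace chain
  have step1 : frobSq ((X - Y) * Q) ≤ frobSq (X - Y) := by
    rw [← trace_proj_eq_frobSq _ _ hQs hQi]
    exact trace_proj_le_frobSq _ _ hQs hQi
  have step2 : (X - Y) * Q = -(Y * Q) := by rw [Matrix.sub_mul, hXQ, zero_sub]
  have step3 : frobSq (-(Y * Q)) = frobSq (Y * Q) := by simp [frobSq]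
  have step4 : frobSq (Y * Q) = (Yᵀ * Y * Q).trace :=
    (trace_proj_eq_frobSq Y Q hQs hQi).symm
  have hYtY : Yᵀ * Y = V * D * Vᵀ := by
    rw [hY, hDdef]
    simp only [Matrix.transpose_mul, Matrix.transpose_transpose, Matrix.mul_assoc]
    rw [← Matrix.mul_assoc Uᵀ U (S * Vᵀ), hU, Matrix.one_mul]
  have step5 : (Yᵀ * Y * Q).trace = (D * P).trace := by
    rw [hYtY, hPdef]
    rw [Matrix.mul_assoc (V * D) Vᵀ Q, Matrix.mul_assoc V D (Vᵀ * Q),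
      Matrix.trace_mul_comm V (D * (Vᵀ * Q)), Matrix.mul_assoc D (Vᵀ * Q) V]
  -- the LP bound
  have hlp : ∑ j : Fin n, (if r ≤ (j : ℕ) then D j j else 0) ≤ ∑ j, D j j * P j j :=
    lp_min hrn (fun j => D j j) (fun j => P j j) hd0 hdm ht0 ht1 (le_of_eq htrP.symm)
  -- the left-hand side
  have hdiff : U * Sr * Vᵀ - Y = U * (Sr - S) * Vᵀ := by
    rw [hY, ← Matrix.sub_mul, ← Matrix.mul_sub]
  have hunit : frobSq (U * (Sr - S) * Vᵀ) = frobSq (Sr - S) := by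
    rw [frobSq_eq_trace, frobSq_eq_trace]
    simp only [Matrix.transpose_mul, Matrix.transpose_transpose, Matrix.mul_assoc]
    rw [← Matrix.mul_assoc Uᵀ U ((Sr - S) * Vᵀ), hU, Matrix.one_mul]
    rw [Matrix.trace_mul_comm V ((Sr - S)ᵀ * ((Sr - S) * Vᵀ)),
      Matrix.mul_assoc (Sr - S)ᵀ ((Sr - S) * Vᵀ) V, Matrix.mul_assoc (Sr - S) Vᵀ V,
      hV, Matrix.mul_one]
  have hE2 : ∀ (i : Fin m) (j : Fin n), ((Sr - S) i j) ^ 2 =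
      if (i : ℕ) = (j : ℕ) ∧ r ≤ (i : ℕ) then σ (i : ℕ) ^ 2 else 0 := by
    intro i j
    rw [Matrix.sub_apply, hSr, hS]
    by_cases h1 : (i : ℕ) = (j : ℕ)
    · by_cases h2 : (i : ℕ) < r
      · rw [if_pos ⟨h1, h2⟩, if_pos h1, if_neg (fun hc => by omega)]
        ring
      · rw [if_neg (fun hc => h2 hc.2), if_pos h1, if_pos ⟨h1, by omega⟩]
        ring
    · rw [if_neg (fun hc => h1 hc.1), if_neg h1, if_neg (fun hc => h1 hc.1)]
      ring
  have hEsum : frobSq (Sr - S) = ∑ j : Fin n, (if r ≤ (j : ℕ) then D j j else 0) := by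
    rw [frobSq, Finset.sum_comm]
    refine Finset.sum_congr rfl fun j _ => ?_
    by_cases hjm : (j : ℕ) < m
    · rw [Finset.sum_eq_single (⟨(j : ℕ), hjm⟩ : Fin m)]
      · rw [hE2, hDdiag j]
        by_cases hrj : r ≤ (j : ℕ)
        · rw [if_pos ⟨rfl, hrj⟩, if_pos hrj, if_pos hjm]
        · rw [if_neg (fun h => hrj h.2), if_neg hrj]
      · intro b _ hbne
        rw [hE2, if_neg]
        exact fun hcon => hbne (Fin.ext hcon.1)
      · simp
    · rw [Finset.sum_eq_zero, hDdiag j, if_neg hjm]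
      · simp
      · intro i _
        rw [hE2, if_neg]
        omega
  -- assemble
  calc frobSq (U * Sr * Vᵀ - Y) = ∑ j : Fin n, (if r ≤ (j : ℕ) then D j j else 0) := by
        rw [hdiff, hunit, hEsum]
    _ ≤ ∑ j, D j j * P j j := hlp
    _ = (D * P).trace := htrDP.symm
    _ = (Yᵀ * Y * Q).trace := step5.symm
    _ = frobSq (Y * Q) := step4.symm
    _ = frobSq ((X - Y) * Q) := by rw [step2, step3]
    _ ≤ frobSq (X - Y) := step1
end

section
/- Let C_S, C_T be real symmetric positive semidefinite n×n matrices, and suppose rank(C_S) ≥ rank(C_T). Then there exists a real n×n matrix A with Aᵀ C_S A = C_T, i.e., the minimum of ‖Aᵀ C_S A − C_T‖_F² over A is 0. -/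
open Matrix

lemma diag_congr_exists (n : ℕ) (d e : Fin n → ℝ) (hd : ∀ i, 0 ≤ d i)
    (he : ∀ i, 0 ≤ e i)
    (hc : Fintype.card {i // e i ≠ 0} ≤ Fintype.card {i // d i ≠ 0}) :
    ∃ M : Matrix (Fin n) (Fin n) ℝ, Mᵀ * diagonal d * M = diagonal e := by
  obtain ⟨f⟩ : Nonempty ({i // e i ≠ 0} ↪ {i // d i ≠ 0}) :=
    Function.Embedding.nonempty_of_card_le hc
  classical
  refine ⟨Matrix.of fun i j => if hj : e j ≠ 0 then
      (if (f ⟨j, hj⟩ : Fin n) = i then Real.sqrt (e j / d (f ⟨j, hj⟩)) else 0) else 0, ?_⟩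
  ext j k
  rw [mul_assoc, mul_apply]
  simp only [transpose_apply, diagonal_mul, of_apply]
  by_cases hj : e j ≠ 0
  · by_cases hk : e k ≠ 0
    · rw [Finset.sum_eq_single ((f ⟨j, hj⟩ : Fin n))]
      · by_cases hjk : j = k
        · subst hjk
          simp only [dif_pos hj, if_pos rfl, diagonal_apply_eq]
          have hdpos : 0 < d (f ⟨j, hj⟩) := lt_of_le_of_ne (hd _) (Ne.symm (f ⟨j, hj⟩).2)
          have hx : Real.sqrt (e j / d (f ⟨j, hj⟩)) * Real.sqrt (e j / d (f ⟨j, hj⟩))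
              = e j / d (f ⟨j, hj⟩) := Real.mul_self_sqrt (div_nonneg (he j) hdpos.le)
          calc Real.sqrt (e j / d (f ⟨j, hj⟩))
                * (d (f ⟨j, hj⟩) * Real.sqrt (e j / d (f ⟨j, hj⟩)))
              = d (f ⟨j, hj⟩) * (Real.sqrt (e j / d (f ⟨j, hj⟩))
                * Real.sqrt (e j / d (f ⟨j, hj⟩))) := by ring
            _ = d (f ⟨j, hj⟩) * (e j / d (f ⟨j, hj⟩)) := by rw [hx]
            _ = e j := by field_simp
        · have hne : ((f ⟨k, hk⟩ : Fin n)) ≠ (f ⟨j, hj⟩ : Fin n) := by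
            intro h
            exact hjk (congrArg Subtype.val (f.injective (Subtype.ext h))).symm
          simp only [dif_pos hj, dif_pos hk, if_pos rfl, if_neg hne,
            diagonal_apply_ne _ hjk]
          ring
      · intro i _ hi
        simp [hj, Ne.symm hi]
      · simp
    · push_neg at hk
      have : diagonal e j k = 0 := by
        by_cases hjk : j = k
        · subst hjk; simp [hk]
        · exact diagonal_apply_ne _ hjk
      rw [this]
      refine Finset.sum_eq_zero fun i _ => ?_
      simp [hk]
  · push_neg at hj
    have : diagonal e j k = 0 := by
      by_cases hjk : j = k
      · subst hjk; simp [hj]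
      · exact diagonal_apply_ne _ hjk
    rw [this]
    refine Finset.sum_eq_zero fun i _ => ?_
    simp [hj]

/-- Case 1 of the CORAL theorem: if `rank C_S ≥ rank C_T`, there is a matrix `A`
with `Aᵀ C_S A = C_T`, i.e. the minimum of `‖Aᵀ C_S A - C_T‖_F²` is 0. -/
theorem coral_rank_ge (n : ℕ) (CS CT : Matrix (Fin n) (Fin n) ℝ)
    (hS : CS.PosSemidef) (hT : CT.PosSemidef)
    (hrank : CT.rank ≤ CS.rank) :
    ∃ A : Matrix (Fin n) (Fin n) ℝ, Aᵀ * CS * A = CT := by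
  have hCS := hS.1
  have hCT := hT.1
  have hd : ∀ i, 0 ≤ hCS.eigenvalues i := fun i => hS.eigenvalues_nonneg i
  have he : ∀ i, 0 ≤ hCT.eigenvalues i := fun i => hT.eigenvalues_nonneg i
  have hcard : Fintype.card {i // hCT.eigenvalues i ≠ 0}
      ≤ Fintype.card {i // hCS.eigenvalues i ≠ 0} := by
    rw [← hCT.rank_eq_card_non_zero_eigs, ← hCS.rank_eq_card_non_zero_eigs]
    exact hrank
  obtain ⟨M, hM⟩ := diag_congr_exists n hCS.eigenvalues hCT.eigenvalues hd he hcard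
  set U : Matrix (Fin n) (Fin n) ℝ := (hCS.eigenvectorUnitary : Matrix (Fin n) (Fin n) ℝ)
  set V : Matrix (Fin n) (Fin n) ℝ := (hCT.eigenvectorUnitary : Matrix (Fin n) (Fin n) ℝ)
  refine ⟨U * M * star V, ?_⟩
  have hsU : star U = Uᵀ := by
    rw [star_eq_conjTranspose, conjTranspose_eq_transpose_of_trivial]
  have hsV : star V = Vᵀ := by
    rw [star_eq_conjTranspose, conjTranspose_eq_transpose_of_trivial]
  have hstar : (U * M * star V)ᵀ = V * Mᵀ * star U := by
    rw [hsU, hsV, transpose_mul, transpose_mul, transpose_transpose, Matrix.mul_assoc]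
  rw [hstar]
  have hUU : star U * U = 1 := Unitary.coe_star_mul_self _
  have hdiagS : star U * CS * U = diagonal (RCLike.ofReal ∘ hCS.eigenvalues) :=
    by rw [← hCS.conjStarAlgAut_star_eigenvectorUnitary, Unitary.conjStarAlgAut_star_apply]
  have hdS : diagonal (RCLike.ofReal ∘ hCS.eigenvalues) = diagonal hCS.eigenvalues := rfl
  have key : V * Mᵀ * star U * (CS * (U * M * star V))
      = V * (Mᵀ * diagonal hCS.eigenvalues * M) * star V := by
    have : star U * CS * U = diagonal hCS.eigenvalues := by rw [hdiagS, hdS]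
    calc V * Mᵀ * star U * (CS * (U * M * star V))
        = V * Mᵀ * (star U * CS * U) * (M * star V) := by
          simp only [Matrix.mul_assoc]
      _ = V * (Mᵀ * diagonal hCS.eigenvalues * M) * star V := by
          rw [this]; simp only [Matrix.mul_assoc]
  rw [Matrix.mul_assoc (V * Mᵀ * star U), key, hM]
  have : V * diagonal hCT.eigenvalues * star V = CT := by
    conv_rhs => rw [hCT.spectral_theorem]
    rfl
  exact this
end

section
/- Let C_S, C_T be real symmetric positive semidefinite n×n matrices and set r = min(rank C_S, rank C_T). For every real n×n matrix A, ‖Aᵀ C_S A − C_T‖_F ≥ ‖C_T − T_r(C_T)‖_F, where T_r(C_T) = U_{T[1:r]} Σ_{T[1:r]} U_{T[1:r]}ᵀ is the best rank-r approximation of C_T given by its top r eigenpairs. -/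
open Matrix

open scoped BigOperators

private lemma frob_diag {n : ℕ} (V : Matrix (Fin n) (Fin n) ℝ) (d : Fin n → ℝ)
    (hV : Vᵀ * V = 1) :
    ∑ i, ∑ j, ((V * Matrix.diagonal d * Vᵀ) i j) ^ 2 = ∑ i, d i ^ 2 := by
  set M := V * Matrix.diagonal d * Vᵀ with hM
  have hMt : Mᵀ = M := by
    rw [hM]
    simp [Matrix.transpose_mul, Matrix.mul_assoc]
  have h1 : ∑ i, ∑ j, (M i j) ^ 2 = Matrix.trace (Mᵀ * M) := by
    unfold Matrix.trace
    rw [Finset.sum_comm]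
    refine Finset.sum_congr rfl fun j _ => ?_
    simp [Matrix.mul_apply, Matrix.diag, sq]
  have h2 : Mᵀ * M = V * (Matrix.diagonal (fun i => d i * d i) * Vᵀ) := by
    rw [hMt, hM]
    calc (V * Matrix.diagonal d * Vᵀ) * (V * Matrix.diagonal d * Vᵀ)
        = V * (Matrix.diagonal d * ((Vᵀ * V) * (Matrix.diagonal d * Vᵀ))) := by
          simp only [Matrix.mul_assoc]
      _ = V * (Matrix.diagonal (fun i => d i * d i) * Vᵀ) := by
          rw [hV, one_mul, ← Matrix.mul_assoc (Matrix.diagonal d) (Matrix.diagonal d) Vᵀ,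
            Matrix.diagonal_mul_diagonal]
  rw [h1, h2, ← Matrix.trace_mul_comm, Matrix.mul_assoc, hV, Matrix.mul_one,
    Matrix.trace_diagonal]
  exact Finset.sum_congr rfl fun i _ => (sq (d i)).symm

private lemma count_eigenvalues_ge {n : ℕ} (X : Matrix (Fin n) (Fin n) ℝ) (hX : X.IsHermitian)
    (c : ℝ) (m : ℕ) (S : Submodule ℝ (EuclideanSpace ℝ (Fin n)))
    (hdim : m ≤ Module.finrank ℝ S)
    (hq : ∀ x ∈ S, c * (inner ℝ x x : ℝ) ≤ (inner ℝ x (Matrix.toEuclideanLin X x) : ℝ)) :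
    m ≤ (Finset.univ.filter fun i => c ≤ hX.eigenvalues i).card := by
  by_contra hcon
  push_neg at hcon
  set P := Finset.univ.filter fun i => c ≤ hX.eigenvalues i with hP
  set b := hX.eigenvectorBasis with hb
  set v : {i // i ∈ Pᶜ} → EuclideanSpace ℝ (Fin n) := fun i => b i.1 with hv
  have hvon : Orthonormal ℝ v := b.orthonormal.comp _ Subtype.val_injective
  have hvli : LinearIndependent ℝ v := hvon.linearIndependent
  set T := Submodule.span ℝ (Set.range v) with hT
  have hTdim : Module.finrank ℝ T = (Pᶜ : Finset (Fin n)).card := by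
    rw [hT, finrank_span_eq_card hvli, Fintype.card_coe]
  have hsum := Submodule.finrank_sup_add_finrank_inf_eq S T
  have hSn : Module.finrank ℝ (S ⊔ T : Submodule ℝ _) ≤ n := by
    have := Submodule.finrank_le (S ⊔ T : Submodule ℝ (EuclideanSpace ℝ (Fin n)))
    simpa [finrank_euclideanSpace_fin] using this
  have hQcard : (Pᶜ : Finset (Fin n)).card = n - P.card := by
    simp [Finset.card_compl]
  have hPn : P.card ≤ n := by simpa using Finset.card_le_univ P
  have hpos : 0 < Module.finrank ℝ (S ⊓ T : Submodule ℝ _) := by omega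
  obtain ⟨⟨x, hxST⟩, hx0⟩ := Module.finrank_pos_iff_exists_ne_zero.mp hpos
  have hxS : x ∈ S := hxST.1
  have hxT : x ∈ T := hxST.2
  have hxne : x ≠ 0 := fun h => hx0 (Subtype.ext h)
  obtain ⟨f, hf⟩ := (Submodule.mem_span_range_iff_exists_fun ℝ).mp hxT
  have heig : ∀ i : {i // i ∈ Pᶜ}, Matrix.toEuclideanLin X (v i) =
      hX.eigenvalues i.1 • v i := by
    intro i
    have h1 := hX.mulVec_eigenvectorBasis i.1
    apply (WithLp.equiv 2 (Fin n → ℝ)).injective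
    simp only [WithLp.equiv_apply, Matrix.ofLp_toEuclideanLin_apply]
    rw [show WithLp.ofLp (v i) = ⇑(b i.1) from rfl]
    rw [h1]
    rfl
  have hXx : Matrix.toEuclideanLin X x = ∑ i, (hX.eigenvalues i.1 * f i) • v i := by
    rw [← hf, map_sum]
    refine Finset.sum_congr rfl fun i _ => ?_
    rw [_root_.map_smul, heig, smul_smul, mul_comm]
  have hinner1 : (inner ℝ x (Matrix.toEuclideanLin X x) : ℝ)
      = ∑ i, hX.eigenvalues i.1 * (f i)^2 := by
    rw [hXx, ← hf, hvon.inner_sum]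
    refine Finset.sum_congr rfl fun i _ => ?_
    simp [sq]; ring
  have hinner2 : (inner ℝ x x : ℝ) = ∑ i, (f i)^2 := by
    rw [← hf, hvon.inner_sum]
    refine Finset.sum_congr rfl fun i _ => ?_
    simp [sq]
  have hfne : ∃ i, f i ≠ 0 := by
    by_contra hall
    push_neg at hall
    apply hxne
    rw [← hf]
    simp [hall]
  obtain ⟨i0, hi0⟩ := hfne
  have hlt : (inner ℝ x (Matrix.toEuclideanLin X x) : ℝ) < c * (inner ℝ x x : ℝ) := by
    rw [hinner1, hinner2, Finset.mul_sum]
    apply Finset.sum_lt_sum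
    · intro i _
      have hiP : hX.eigenvalues i.1 < c := by
        have h2 := i.2
        simp only [Finset.mem_compl, hP, Finset.mem_filter, Finset.mem_univ, true_and,
          not_le] at h2
        exact h2
      exact mul_le_mul_of_nonneg_right (le_of_lt hiP) (sq_nonneg _)
    · refine ⟨i0, Finset.mem_univ _, ?_⟩
      have hiP : hX.eigenvalues i0.1 < c := by
        have h2 := i0.2
        simp only [Finset.mem_compl, hP, Finset.mem_filter, Finset.mem_univ, true_and,
          not_le] at h2
        exact h2
      have : 0 < (f i0)^2 := by positivity
      exact mul_lt_mul_of_pos_right hiP this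
  exact absurd (hq x hxS) (not_le.mpr hlt)

private lemma sum_sq_tail_le {n : ℕ} (lam μ : Fin n → ℝ) (r : ℕ) (hμ0 : ∀ i, 0 ≤ μ i)
    (hcount : ∀ j : Fin n, r ≤ (j : ℕ) →
      (j : ℕ) + 1 - r ≤ (Finset.univ.filter fun i => μ j ≤ lam i).card) :
    ∑ j ∈ Finset.univ.filter (fun j : Fin n => r ≤ (j : ℕ)), μ j ^ 2 ≤ ∑ i, lam i ^ 2 := by
  set σ := Tuple.sort lam with hσ
  set s : Fin n → ℝ := lam ∘ σ with hs
  have hmono : Monotone s := Tuple.monotone_sort lam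
  have hsum : ∑ i, lam i ^ 2 = ∑ i, s i ^ 2 := by
    rw [hs]
    exact (Equiv.sum_comp σ (fun i => lam i ^ 2)).symm
  have hcard : ∀ c : ℝ, (Finset.univ.filter fun i => c ≤ lam i).card
      = (Finset.univ.filter fun i => c ≤ s i).card := by
    intro c
    apply Finset.card_bij' (fun i _ => σ.symm i) (fun i _ => σ i)
    · intro a ha
      simp only [Finset.mem_filter, Finset.mem_univ, true_and] at ha ⊢
      simpa [hs] using ha
    · intro a ha
      simp only [Finset.mem_filter, Finset.mem_univ, true_and] at ha ⊢
      simpa [hs] using ha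
    · intro a _; simp
    · intro a _; simp
  set e : Fin n → Fin n := fun j => ⟨n - 1 - ((j : ℕ) - r), by
    have := j.isLt; omega⟩ with he
  have key : ∀ j : Fin n, r ≤ (j : ℕ) → μ j ≤ s (e j) := by
    intro j hj
    set F := Finset.univ.filter fun i => μ j ≤ s i with hF
    have hkF : (j : ℕ) + 1 - r ≤ F.card := by
      rw [hF, ← hcard]
      exact hcount j hj
    have hFne : F.Nonempty := by
      rw [← Finset.card_pos]
      have := j.isLt
      omega
    set i0 := F.min' hFne with hi0
    have hi0F : i0 ∈ F := F.min'_mem hFne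
    have hsub : F ⊆ Finset.Ici i0 := fun i hi => Finset.mem_Ici.mpr (F.min'_le i hi)
    have hcard2 : F.card ≤ n - (i0 : ℕ) := by
      have := Finset.card_le_card hsub
      rwa [Fin.card_Ici] at this
    have hi0le : (i0 : ℕ) ≤ (e j : ℕ) := by
      have hjlt := j.isLt
      have : (e j : ℕ) = n - 1 - ((j : ℕ) - r) := rfl
      omega
    have hss : s i0 ≤ s (e j) := hmono (by exact_mod_cast hi0le)
    have hμs : μ j ≤ s i0 := by
      have := hi0F
      rw [hF, Finset.mem_filter] at this
      exact this.2
    linarith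
  have hinj : ∀ j1 ∈ Finset.univ.filter (fun j : Fin n => r ≤ (j : ℕ)),
      ∀ j2 ∈ Finset.univ.filter (fun j : Fin n => r ≤ (j : ℕ)), e j1 = e j2 → j1 = j2 := by
    intro j1 h1 j2 h2 hee
    simp only [Finset.mem_filter, Finset.mem_univ, true_and] at h1 h2
    have hv : (e j1 : ℕ) = (e j2 : ℕ) := congrArg Fin.val hee
    have l1 := j1.isLt
    have l2 := j2.isLt
    apply Fin.ext
    simp only [he] at hv
    omega
  calc ∑ j ∈ Finset.univ.filter (fun j : Fin n => r ≤ (j : ℕ)), μ j ^ 2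
      ≤ ∑ j ∈ Finset.univ.filter (fun j : Fin n => r ≤ (j : ℕ)), s (e j) ^ 2 := by
        apply Finset.sum_le_sum
        intro j hjmem
        simp only [Finset.mem_filter, Finset.mem_univ, true_and] at hjmem
        exact pow_le_pow_left₀ (hμ0 j) (key j hjmem) 2
    _ = ∑ i ∈ (Finset.univ.filter (fun j : Fin n => r ≤ (j : ℕ))).image e, s i ^ 2 := by
        rw [Finset.sum_image hinj]
    _ ≤ ∑ i, s i ^ 2 := by
        apply Finset.sum_le_sum_of_subset_of_nonneg (Finset.subset_univ _)
        intro i _ _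
        exact sq_nonneg _
    _ = ∑ i, lam i ^ 2 := hsum.symm

/-- Lower bound for the CORAL objective: with `r = min(rank C_S, rank C_T)`,
for every `A`, `‖Aᵀ C_S A - C_T‖_F ≥ ‖C_T - T_r(C_T)‖_F`, where `T_r(C_T)` keeps
the top `r` eigenpairs of `C_T`. -/
theorem coral_lower_bound (n : ℕ) (CS CT : Matrix (Fin n) (Fin n) ℝ)
    (hS : CS.PosSemidef) (hT : CT.PosSemidef)
    (UT : Matrix (Fin n) (Fin n) ℝ) (μ : Fin n → ℝ)
    (hU : UTᵀ * UT = 1) (hμ : ∀ i, 0 ≤ μ i)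
    (hdec : ∀ i j : Fin n, i ≤ j → μ j ≤ μ i)
    (hCT : CT = UT * Matrix.diagonal μ * UTᵀ)
    (r : ℕ) (hr : r = min CS.rank CT.rank)
    (Tr : Matrix (Fin n) (Fin n) ℝ)
    (hTr : Tr = UT * Matrix.diagonal (fun i : Fin n => if (i : ℕ) < r then μ i else 0) * UTᵀ) :
    ∀ A : Matrix (Fin n) (Fin n) ℝ,
      Real.sqrt (∑ i, ∑ j, ((CT - Tr) i j) ^ 2) ≤
        Real.sqrt (∑ i, ∑ j, ((Aᵀ * CS * A - CT) i j) ^ 2) := by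
  intro A
  have hLHSmat : CT - Tr
      = UT * Matrix.diagonal (fun j : Fin n => if (j : ℕ) < r then 0 else μ j) * UTᵀ := by
    rw [hCT, hTr, ← Matrix.sub_mul, ← Matrix.mul_sub, Matrix.diagonal_sub]
    congr 2
    ext i k
    by_cases h : (i : ℕ) < r <;> simp [Matrix.diagonal_apply, h]
  have hLHS : ∑ i, ∑ j, ((CT - Tr) i j) ^ 2
      = ∑ j ∈ Finset.univ.filter (fun j : Fin n => r ≤ (j : ℕ)), μ j ^ 2 := by
    rw [hLHSmat, frob_diag _ _ hU, Finset.sum_filter]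
    refine Finset.sum_congr rfl fun j _ => ?_
    by_cases h : (j : ℕ) < r
    · simp [h, Nat.not_le.mpr h]
    · simp [h, Nat.le_of_not_lt h]
  rw [hLHS]
  rcases le_total CT.rank CS.rank with hcase | hcase
  · -- trivial case : r = CT.rank, the tail of μ vanishes
    have hrr : r = CT.rank := by rw [hr]; exact min_eq_right hcase
    have hUdet : IsUnit UT.det := by
      have h1 : UT.det * UT.det = 1 := by
        have h0 := congrArg Matrix.det hU
        rwa [Matrix.det_mul, Matrix.det_transpose, Matrix.det_one] at h0
      exact IsUnit.of_mul_eq_one _ h1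
    have hUtdet : IsUnit UTᵀ.det := by rwa [Matrix.det_transpose]
    have hrank : CT.rank = (Finset.univ.filter fun i => μ i ≠ 0).card := by
      rw [hCT, Matrix.mul_assoc,
        Matrix.rank_mul_eq_right_of_isUnit_det UT _ hUdet,
        Matrix.rank_mul_eq_left_of_isUnit_det UTᵀ _ hUtdet,
        Matrix.rank_diagonal, Fintype.card_subtype]
    have hzero : ∀ j : Fin n, r ≤ (j : ℕ) → μ j = 0 := by
      intro j hj
      by_contra hne
      have hposμ : 0 < μ j := lt_of_le_of_ne (hμ j) (Ne.symm hne)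
      have hsub : Finset.Iic j ⊆ Finset.univ.filter fun i => μ i ≠ 0 := by
        intro i hi
        rw [Finset.mem_Iic] at hi
        refine Finset.mem_filter.mpr ⟨Finset.mem_univ _, ?_⟩
        exact ne_of_gt (lt_of_lt_of_le hposμ (hdec i j hi))
      have hc := Finset.card_le_card hsub
      rw [Fin.card_Iic] at hc
      omega
    have hz : ∑ j ∈ Finset.univ.filter (fun j : Fin n => r ≤ (j : ℕ)), μ j ^ 2 = 0 := by
      apply Finset.sum_eq_zero
      intro j hjmem
      rw [Finset.mem_filter] at hjmem
      rw [hzero j hjmem.2]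
      ring
    rw [hz, Real.sqrt_zero]
    exact Real.sqrt_nonneg _
  · -- main case : r = CS.rank
    have hrr : r = CS.rank := by rw [hr]; exact min_eq_left hcase
    set B := Aᵀ * CS * A with hB
    have hBrank : B.rank ≤ r := by
      rw [hrr, hB]
      exact le_trans (Matrix.rank_mul_le_left _ _) (Matrix.rank_mul_le_right _ _)
    have hBsymm : B.IsHermitian := by
      rw [hB, show Aᵀ = Aᴴ from (Matrix.conjTranspose_eq_transpose_of_trivial A).symm]
      exact Matrix.isHermitian_conjTranspose_mul_mul A hS.isHermitian
    set X := CT - B with hX0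
    have hXsymm : X.IsHermitian := hT.isHermitian.sub hBsymm
    set lam := hXsymm.eigenvalues with hlam
    have hRHSval : ∑ i, ∑ j, ((B - CT) i j) ^ 2 = ∑ i, lam i ^ 2 := by
    -- RHS equals sum of squared eigenvalues of X
      have hflip : ∀ i j, ((B - CT) i j) ^ 2 = (X i j) ^ 2 := by
        intro i j
        rw [hX0]
        simp only [Matrix.sub_apply]
        ring
      have hWspec := hXsymm.spectral_theorem
      set W : Matrix (Fin n) (Fin n) ℝ :=
        (hXsymm.eigenvectorUnitary : Matrix (Fin n) (Fin n) ℝ) with hW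
      have hstar : star W = Wᵀ := by
        rw [Matrix.star_eq_conjTranspose, Matrix.conjTranspose_eq_transpose_of_trivial]
      have hWU : Wᵀ * W = 1 := by
        rw [← hstar]
        exact Unitary.coe_star_mul_self hXsymm.eigenvectorUnitary
      have hofReal : (RCLike.ofReal ∘ lam : Fin n → ℝ) = lam := by
        funext i
        simp
      have hXeq : X = W * Matrix.diagonal lam * Wᵀ := by
        rw [← hstar, ← hofReal]
        exact hWspec
      calc ∑ i, ∑ j, ((B - CT) i j) ^ 2 = ∑ i, ∑ j, (X i j) ^ 2 :=
            Finset.sum_congr rfl fun i _ => Finset.sum_congr rfl fun j _ => hflip i j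
        _ = ∑ i, lam i ^ 2 := by rw [hXeq]; exact frob_diag _ _ hWU
    -- eigenvector columns of UT
    set u : Fin n → EuclideanSpace ℝ (Fin n) :=
      fun k => (WithLp.equiv 2 (Fin n → ℝ)).symm (fun i => UT i k) with hu
    have hucol : ∀ k, (fun i => UT i k) = UT *ᵥ Pi.single k 1 := by
      intro k
      funext i
      simp [Matrix.mulVec_single]
    have horthu : Orthonormal ℝ u := by
      rw [orthonormal_iff_ite]
      intro k l
      have h1 : (inner ℝ (u k) (u l) : ℝ) = ∑ i, UT i k * UT i l := by
        rw [hu]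
        simp [PiLp.inner_apply, mul_comm]
      have h2 : ∑ i, UT i k * UT i l = (UTᵀ * UT) k l := by
        simp [Matrix.mul_apply, Matrix.transpose_apply]
      rw [h1, h2, hU, Matrix.one_apply]
    have heigu : ∀ k, Matrix.toEuclideanLin CT (u k) = μ k • u k := by
      intro k
      rw [hu, WithLp.equiv_symm_apply, Matrix.toEuclideanLin_apply_piLp_toLp, hucol k, Matrix.mulVec_mulVec]
      have hCU : CT * UT = UT * Matrix.diagonal μ := by
        rw [hCT, Matrix.mul_assoc (UT * Matrix.diagonal μ), hU, Matrix.mul_one]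
      rw [hCU, ← Matrix.mulVec_mulVec, Matrix.diagonal_mulVec_single, mul_one]
      have hsingle : (Pi.single k (μ k) : Fin n → ℝ) = μ k • (Pi.single k (1:ℝ) : Fin n → ℝ) := by
        funext i
        simp [Pi.single_apply, mul_ite]
      rw [hsingle, Matrix.mulVec_smul, WithLp.toLp_smul, ← hucol k]
    -- counting hypothesis
    have hcount : ∀ j : Fin n, r ≤ (j : ℕ) →
        (j : ℕ) + 1 - r ≤ (Finset.univ.filter fun i => μ j ≤ lam i).card := by
      intro j hj
      set v : Fin ((j : ℕ) + 1) → EuclideanSpace ℝ (Fin n) :=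
        fun i => u (Fin.castLE j.isLt i) with hv
      have hvon : Orthonormal ℝ v := horthu.comp _ (Fin.castLE_injective _)
      set Ssp := Submodule.span ℝ (Set.range v) ⊓
        LinearMap.ker (Matrix.toEuclideanLin B) with hSsp
      have hd1 : Module.finrank ℝ (Submodule.span ℝ (Set.range v)) = (j : ℕ) + 1 := by
        rw [finrank_span_eq_card hvon.linearIndependent, Fintype.card_fin]
      have hd2 : B.rank + Module.finrank ℝ (LinearMap.ker (Matrix.toEuclideanLin B)) = n := by
        have h3 : B.rank = Module.finrank ℝ (LinearMap.range (Matrix.toEuclideanLin B)) := by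
          rw [Matrix.toEuclideanLin_eq_toLin]
          exact Matrix.rank_eq_finrank_range_toLin B _ _
        have h4 := LinearMap.finrank_range_add_finrank_ker (Matrix.toEuclideanLin B)
        rw [finrank_euclideanSpace_fin] at h4
        omega
      have hdim : (j : ℕ) + 1 - r ≤ Module.finrank ℝ Ssp := by
        have h5 := Submodule.finrank_sup_add_finrank_inf_eq
          (Submodule.span ℝ (Set.range v)) (LinearMap.ker (Matrix.toEuclideanLin B))
        have h6 : Module.finrank ℝ
            (Submodule.span ℝ (Set.range v) ⊔ LinearMap.ker (Matrix.toEuclideanLin B) :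
              Submodule ℝ (EuclideanSpace ℝ (Fin n))) ≤ n := by
          have := Submodule.finrank_le
            (Submodule.span ℝ (Set.range v) ⊔ LinearMap.ker (Matrix.toEuclideanLin B) :
              Submodule ℝ (EuclideanSpace ℝ (Fin n)))
          simpa [finrank_euclideanSpace_fin] using this
        rw [hd1] at h5
        rw [hSsp]
        omega
      apply count_eigenvalues_ge X hXsymm (μ j) _ Ssp hdim
      intro x hx
      rw [hSsp, Submodule.mem_inf] at hx
      obtain ⟨hx1, hx2⟩ := hx
      obtain ⟨f, hf⟩ := (Submodule.mem_span_range_iff_exists_fun ℝ).mp hx1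
      have hxker : Matrix.toEuclideanLin B x = 0 := hx2
      have hXlin : Matrix.toEuclideanLin X x = Matrix.toEuclideanLin CT x := by
        rw [hX0, map_sub, LinearMap.sub_apply, hxker, sub_zero]
      have hCTx : Matrix.toEuclideanLin CT x
          = ∑ i, (μ (Fin.castLE j.isLt i) * f i) • v i := by
        rw [← hf, map_sum]
        refine Finset.sum_congr rfl fun i _ => ?_
        rw [_root_.map_smul, hv]
        simp only []
        rw [heigu, smul_smul, mul_comm]
      have hinner1 : (inner ℝ x (Matrix.toEuclideanLin X x) : ℝ)
          = ∑ i, μ (Fin.castLE j.isLt i) * (f i) ^ 2 := by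
        rw [hXlin, hCTx, ← hf, hvon.inner_sum]
        refine Finset.sum_congr rfl fun i _ => ?_
        simp [sq]
        ring
      have hinner2 : (inner ℝ x x : ℝ) = ∑ i, (f i) ^ 2 := by
        rw [← hf, hvon.inner_sum]
        refine Finset.sum_congr rfl fun i _ => ?_
        simp [sq]
      rw [hinner1, hinner2, Finset.mul_sum]
      apply Finset.sum_le_sum
      intro i _
      have hle : μ j ≤ μ (Fin.castLE j.isLt i) := by
        apply hdec
        rw [Fin.le_def]
        exact Nat.lt_succ_iff.mp i.isLt
      exact mul_le_mul_of_nonneg_right hle (sq_nonneg _)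
    have hmain := sum_sq_tail_le lam μ r hμ hcount
    apply Real.sqrt_le_sqrt
    calc ∑ j ∈ Finset.univ.filter (fun j : Fin n => r ≤ (j : ℕ)), μ j ^ 2
        ≤ ∑ i, lam i ^ 2 := hmain
      _ = ∑ i, ∑ j, ((B - CT) i j) ^ 2 := hRHSval.symm
end
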